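/- Let R be a finite nonempty set, u : R → ℝ a utility function, λ > 0, and let OPT = min_{r∈R} u(r). If r* is sampled by the exponential mechanism, i.e. with probability proportional to exp(−u(r)/λ), then the expected utility satisfies E[u(r*)] ≤ OPT + λ·(ln|R| + 1). -/

import Mathlib

open Finset

/-- **Utility of the exponential mechanism (expectation bound).**
Let `R` be a finite nonempty set, `u : R → ℝ`, `lam > 0`, and `OPT = min_{r ∈ R} u r`.
If `r*` is sampled with probability proportional to `exp (-u r / lam)`, then
`E[u r*] ≤ OPT + lam * (ln |R| + 1)`. -/
theorem exponential_mechanism_expectation_bound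
    {R : Type*} [Fintype R] [Nonempty R] (u : R → ℝ) (lam : ℝ) (hlam : 0 < lam)
    (OPT : ℝ) (hOPT : OPT = Finset.univ.inf' Finset.univ_nonempty u) :
    (∑ r : R, (Real.exp (-u r / lam) / ∑ p : R, Real.exp (-u p / lam)) * u r)
      ≤ OPT + lam * (Real.log (Fintype.card R) + 1) := by
  set Z : ℝ := ∑ p : R, Real.exp (-u p / lam) with hZ
  have hZpos : 0 < Z := Finset.sum_pos (fun p _ => Real.exp_pos _) Finset.univ_nonempty
  set n : ℕ := Fintype.card R with hn
  have hnpos : (0:ℝ) < n := by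
    have := Fintype.card_pos (α := R)
    exact_mod_cast this
  set p : R → ℝ := fun r => Real.exp (-u r / lam) / Z with hpdef
  have hppos : ∀ r : R, 0 < p r := fun r => div_pos (Real.exp_pos _) hZpos
  have hpsum : ∑ r : R, p r = 1 := by
    simp only [hpdef]
    rw [← Finset.sum_div, ← hZ, div_self (ne_of_gt hZpos)]
  -- u r expressed via log p r
  have hu : ∀ r : R, u r = -lam * Real.log (p r) - lam * Real.log Z := by
    intro r
    have : Real.log (p r) = -u r / lam - Real.log Z := by
      rw [hpdef]
      rw [Real.log_div (Real.exp_ne_zero _) (ne_of_gt hZpos), Real.log_exp]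
    rw [this]
    field_simp
    ring
  -- pointwise bound
  have key : ∀ r : R, p r * u r
      ≤ lam * (p r * Real.log n + 1 / n - p r) - lam * (p r * Real.log Z) := by
    intro r
    have hlog : Real.log (1 / ((n : ℝ) * p r)) ≤ 1 / ((n : ℝ) * p r) - 1 :=
      Real.log_le_sub_one_of_pos (div_pos one_pos (mul_pos hnpos (hppos r)))
    have hlog' : -Real.log ((n : ℝ) * p r) ≤ 1 / ((n : ℝ) * p r) - 1 := by
      rwa [Real.log_div one_ne_zero (ne_of_gt (mul_pos hnpos (hppos r))), Real.log_one, zero_sub] at hlog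
    have hmul : p r * (-Real.log ((n : ℝ) * p r)) ≤ 1 / n - p r := by
      have := mul_le_mul_of_nonneg_left hlog' (le_of_lt (hppos r))
      calc p r * (-Real.log ((n : ℝ) * p r)) ≤ p r * (1 / ((n : ℝ) * p r) - 1) := this
        _ = 1 / n - p r := by
            field_simp
            rw [mul_sub, mul_one_div_cancel (ne_of_gt (hppos r))]
    have hsplit : Real.log ((n : ℝ) * p r) = Real.log n + Real.log (p r) :=
      Real.log_mul (ne_of_gt hnpos) (ne_of_gt (hppos r))
    have : p r * u r = lam * (p r * Real.log n + p r * (-Real.log ((n : ℝ) * p r)))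
        - lam * (p r * Real.log Z) := by
      rw [hu r, hsplit]; ring
    rw [this]
    have := mul_le_mul_of_nonneg_left hmul (le_of_lt hlam)
    nlinarith
  have hsum : (∑ r : R, p r * u r)
      ≤ lam * Real.log n - lam * Real.log Z := by
    calc (∑ r : R, p r * u r)
        ≤ ∑ r : R, (lam * (p r * Real.log n + 1 / n - p r) - lam * (p r * Real.log Z)) :=
          Finset.sum_le_sum (fun r _ => key r)
      _ = lam * ((∑ r : R, p r) * Real.log n + (n : ℝ) * (1 / n) - ∑ r : R, p r)
            - lam * ((∑ r : R, p r) * Real.log Z) := by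
          rw [Finset.sum_sub_distrib, ← Finset.mul_sum, ← Finset.mul_sum]
          congr 1
          · congr 1
            rw [Finset.sum_sub_distrib, Finset.sum_add_distrib, ← Finset.sum_mul]
            congr 1
            congr 1
            rw [Finset.sum_const, Finset.card_univ, ← hn, nsmul_eq_mul]
          · congr 1
            rw [← Finset.sum_mul]
      _ = lam * Real.log n - lam * Real.log Z := by
          rw [hpsum, mul_one_div_cancel (ne_of_gt hnpos)]
          ring
  -- Z ≥ exp(-OPT/lam)
  obtain ⟨r0, _, hr0⟩ := Finset.exists_mem_eq_inf' (Finset.univ_nonempty) u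
  have hZge : Real.exp (-OPT / lam) ≤ Z := by
    rw [hOPT, hr0]
    exact Finset.single_le_sum (f := fun r => Real.exp (-u r / lam))
      (fun r _ => le_of_lt (Real.exp_pos _)) (Finset.mem_univ r0)
  have hlogZ : -OPT / lam ≤ Real.log Z := by
    have := Real.log_le_log (Real.exp_pos _) hZge
    rwa [Real.log_exp] at this
  have hfinal : -lam * Real.log Z ≤ OPT := by
    have h1 := mul_le_mul_of_nonneg_left hlogZ (le_of_lt hlam)
    have h2 : lam * (-OPT / lam) = -OPT := by
      field_simp
    nlinarith
  calc (∑ r : R, p r * u r) ≤ lam * Real.log n - lam * Real.log Z := hsum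
    _ ≤ OPT + lam * (Real.log n + 1) := by nlinarith
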